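/- For every α ∈ (0,1), the cubic R_α(w) = w³ − 8w² + 8(3 − 2α)w + 16(α − 1) has exactly one root in the interval (0,1). -/

import Mathlib

/-- For `α ∈ (0,1)`, the Rayleigh cubic has exactly one root in `(0,1)`. -/
theorem rayleigh_cubic_unique_root (α : ℝ) (hα : α ∈ Set.Ioo (0 : ℝ) 1) :
    ∃! w, w ∈ Set.Ioo (0 : ℝ) 1 ∧
      w ^ 3 - 8 * w ^ 2 + 8 * (3 - 2 * α) * w + 16 * (α - 1) = 0 := by
  obtain ⟨hα0, hα1⟩ := hα
  set f : ℝ → ℝ := fun w => w ^ 3 - 8 * w ^ 2 + 8 * (3 - 2 * α) * w + 16 * (α - 1)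
    with hf
  have hcont : Continuous f := by
    apply Continuous.add
    apply Continuous.add
    apply Continuous.sub
    · exact continuous_pow 3
    · exact (continuous_const.mul (continuous_pow 2))
    · exact continuous_const.mul continuous_id
    · exact continuous_const
  have hf0 : f 0 < 0 := by
    simp only [hf]; nlinarith
  have hf1 : f 1 = 1 := by simp only [hf]; ring
  -- first derivative
  have hd1 : ∀ x : ℝ, HasDerivAt f (3 * x ^ 2 - 16 * x + 8 * (3 - 2 * α)) x := by
    intro x
    have h1 : HasDerivAt (fun w : ℝ => w ^ 3) (3 * x ^ 2) x := by
      simpa using hasDerivAt_pow 3 x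
    have h2 : HasDerivAt (fun w : ℝ => 8 * w ^ 2) (8 * (2 * x)) x := by
      have := (hasDerivAt_pow 2 x).const_mul (8 : ℝ)
      simpa using this
    have h3 : HasDerivAt (fun w : ℝ => 8 * (3 - 2 * α) * w) (8 * (3 - 2 * α)) x := by
      simpa using (hasDerivAt_id x).const_mul (8 * (3 - 2 * α))
    have := ((h1.sub h2).add h3).add_const (16 * (α - 1))
    exact this.congr_deriv (by ring)
  have hderiv : deriv f = fun x => 3 * x ^ 2 - 16 * x + 8 * (3 - 2 * α) := by
    funext x; exact (hd1 x).deriv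
  have hd2 : ∀ x : ℝ, deriv (deriv f) x = 6 * x - 16 := by
    intro x
    rw [hderiv]
    have h1 : HasDerivAt (fun w : ℝ => 3 * w ^ 2 - 16 * w + 8 * (3 - 2 * α))
        (6 * x - 16) x := by
      have ha : HasDerivAt (fun w : ℝ => 3 * w ^ 2) (3 * (2 * x)) x := by
        have := (hasDerivAt_pow 2 x).const_mul (3 : ℝ)
        simpa using this
      have hb : HasDerivAt (fun w : ℝ => 16 * w) (16 : ℝ) x := by
        simpa using (hasDerivAt_id x).const_mul (16 : ℝ)
      have := (ha.sub hb).add_const (8 * (3 - 2 * α))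
      exact this.congr_deriv (by ring)
    exact h1.deriv
  have hconc : StrictConcaveOn ℝ (Set.Icc (0 : ℝ) 1) f := by
    apply strictConcaveOn_of_deriv2_neg (convex_Icc 0 1) hcont.continuousOn
    intro x hx
    rw [interior_Icc] at hx
    have : deriv^[2] f x = deriv (deriv f) x := by
      simp [Function.iterate_succ, Function.comp]
    rw [this, hd2]
    nlinarith [hx.2]
  -- existence via IVT
  have hex : ∃ w ∈ Set.Ioo (0 : ℝ) 1, f w = 0 := by
    have h := intermediate_value_Ioo (le_of_lt one_pos) hcont.continuousOn
    have h0 : (0 : ℝ) ∈ Set.Ioo (f 0) (f 1) := ⟨hf0, by rw [hf1]; norm_num⟩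
    obtain ⟨w, hw, hfw⟩ := h h0
    exact ⟨w, hw, hfw⟩
  obtain ⟨w, hw, hfw⟩ := hex
  -- key uniqueness lemma
  have key : ∀ a b : ℝ, a ∈ Set.Ioo (0 : ℝ) 1 → b ∈ Set.Ioo (0 : ℝ) 1 →
      f a = 0 → f b = 0 → a < b → False := by
    intro a b ha hb hfa hfb hab
    have ha1 : a < 1 := ha.2
    have hb1 : b < 1 := hb.2
    have hden : (0 : ℝ) < 1 - a := by linarith
    set t : ℝ := (1 - b) / (1 - a) with ht
    set s : ℝ := (b - a) / (1 - a) with hs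
    have htpos : 0 < t := div_pos (by linarith) hden
    have hspos : 0 < s := div_pos (by linarith) hden
    have hts : t + s = 1 := by
      rw [ht, hs, ← add_div, div_eq_one_iff_eq hden.ne']
      ring
    have hcomb : t • a + s • (1 : ℝ) = b := by
      simp only [smul_eq_mul, ht, hs]
      field_simp
      ring
    have h1mem : (1 : ℝ) ∈ Set.Icc (0 : ℝ) 1 := by norm_num
    have hamem : a ∈ Set.Icc (0 : ℝ) 1 := ⟨le_of_lt ha.1, le_of_lt ha1⟩
    have hne : a ≠ 1 := ne_of_lt ha1
    have := hconc.2 hamem h1mem hne htpos hspos hts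
    rw [hcomb, hfa, hf1, hfb] at this
    simp only [smul_eq_mul] at this
    nlinarith
  refine ⟨w, ⟨hw, hfw⟩, ?_⟩
  rintro y ⟨hy, hfy⟩
  rcases lt_trichotomy y w with h | h | h
  · exact absurd (key y w hy hw hfy hfw h) (fun hF => hF)
  · exact h
  · exact absurd (key w y hw hy hfw hfy h) (fun hF => hF)
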